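/- If n > 1 and φ(u_n) = u_m for some m < n, then m is even. -/

import Mathlib

/-- If `¬ 4 ∣ φ(N)` and `N ≥ 3`, then `N ≤ 3 φ(N)`. -/
lemma tot_lemma_aux (N : ℕ) (h3 : 3 ≤ N) (h4 : ¬ (4 ∣ N.totient)) : N ≤ 3 * N.totient := by
  have hN0 : N ≠ 0 := by omega
  by_cases hodd : ∃ p, p.Prime ∧ p ∣ N ∧ p ≠ 2
  · obtain ⟨p, pp, hpN, hp2⟩ := hodd
    have hp3 : 3 ≤ p := by have := pp.two_le; omega
    have hpodd : p % 2 = 1 := by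
      rcases pp.eq_two_or_odd with hh | hh
      · omega
      · exact hh
    have hk1 : 0 < N.factorization p := pp.factorization_pos_of_dvd hN0 hpN
    set k := N.factorization p with hk
    set K := N / p ^ k with hKdef
    have hN : p ^ k * K = N := Nat.ordProj_mul_ordCompl_eq_self N p
    have hcp : Nat.Coprime p K := Nat.coprime_ordCompl pp hN0
    have hcpk : Nat.Coprime (p ^ k) K := Nat.Coprime.pow_left k hcp
    have htm : N.totient = (p ^ k).totient * K.totient := by
      rw [← hN]; exact Nat.totient_mul hcpk
    have htp : (p ^ k).totient = p ^ (k - 1) * (p - 1) := Nat.totient_prime_pow pp hk1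
    have hK2 : K ≤ 2 := by
      by_contra hK3
      push_neg at hK3
      have he1 : 2 ∣ (p ^ k).totient := by
        rw [htp]; exact Dvd.dvd.mul_left (by omega : (2:ℕ) ∣ p - 1) _
      have he2 : 2 ∣ K.totient := by
        obtain ⟨t, ht⟩ := Nat.totient_even hK3
        exact ⟨t, by omega⟩
      apply h4
      rw [htm]
      obtain ⟨a, ha⟩ := he1
      obtain ⟨b, hb⟩ := he2
      exact ⟨a * b, by rw [ha, hb]; ring⟩
    have hK1 : 1 ≤ K := by
      rcases Nat.eq_zero_or_pos K with h0 | h0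
      · rw [h0, mul_zero] at hN; omega
      · exact h0
    have htK : K.totient = 1 := by
      interval_cases K
      · exact Nat.totient_one
      · exact Nat.totient_two
    have hp1 : p ^ k = p ^ (k - 1) * p := by
      rw [← pow_succ]; congr 1; omega
    have hle1 : N ≤ p ^ (k - 1) * p * 2 := by
      rw [← hN, ← hp1]
      exact Nat.mul_le_mul_left _ hK2
    rw [htm, htK, mul_one, htp]
    calc N ≤ p ^ (k - 1) * p * 2 := hle1
      _ = p ^ (k - 1) * (p * 2) := by ring
      _ ≤ p ^ (k - 1) * (3 * (p - 1)) := Nat.mul_le_mul_left _ (by omega)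
      _ = 3 * (p ^ (k - 1) * (p - 1)) := by ring
  · push_neg at hodd
    have hall : ∀ {q : ℕ}, q.Prime → q ∣ N → q = 2 := fun hq hqN =>
      hodd _ hq hqN
    have hN2 : N = 2 ^ N.primeFactorsList.length :=
      Nat.eq_prime_pow_of_unique_prime_dvd hN0 hall
    set a := N.primeFactorsList.length with hadef
    have ha2 : 2 ≤ a := by
      by_contra hlt
      have : (2:ℕ) ^ a ≤ 2 ^ 1 := Nat.pow_le_pow_right (by norm_num) (by omega)
      omega
    have htN : N.totient = 2 ^ (a - 1) := by
      rw [hN2, Nat.totient_prime_pow Nat.prime_two (by omega)]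
      simp
    have ha3 : a < 3 := by
      by_contra hge
      push_neg at hge
      apply h4
      rw [htN]
      exact ⟨2 ^ (a - 3), by rw [show (4:ℕ) = 2 ^ 2 from rfl, ← pow_add]; congr 1; omega⟩
    have ha : a = 2 := by omega
    have hN4 : N = 4 := by rw [hN2, ha]; norm_num
    rw [hN4]
    decide

theorem stmt_16 (P : ℕ) (hP : 3 ≤ P) (u : ℕ → ℕ)
    (hu0 : u 0 = 0) (hu1 : u 1 = 1)
    (hrec : ∀ n, 2 ≤ n → u n = P * u (n - 1) + u (n - 2))
    (n m : ℕ) (hn : 1 < n) (hmn : m < n)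
    (h : Nat.totient (u n) = u m) :
    Even m := by
  have hrec' : ∀ k, u (k + 2) = P * u (k + 1) + u k := by
    intro k
    have := hrec (k + 2) (by omega)
    simpa using this
  have hpos2 : ∀ k, 0 < u (k + 1) ∧ 0 < u (k + 2) := by
    intro k
    induction k with
    | zero =>
      refine ⟨by rw [hu1]; norm_num, ?_⟩
      rw [hrec' 0, hu0, hu1]
      omega
    | succ k ih =>
      refine ⟨ih.2, ?_⟩
      rw [hrec' (k + 1)]
      have h1 := ih.2
      have : 0 < P * u (k + 2) := Nat.mul_pos (by omega) h1
      omega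
  have hpos : ∀ k, 1 ≤ k → 0 < u k := by
    intro k hk
    obtain ⟨j, rfl⟩ : ∃ j, k = j + 1 := ⟨k - 1, by omega⟩
    exact (hpos2 j).1
  have hmono : ∀ a b, 1 ≤ a → a ≤ b → u a ≤ u b := by
    intro a b ha hab
    induction b, hab using Nat.le_induction with
    | base => exact le_rfl
    | succ b hb ih =>
      have hb1 : 1 ≤ b := le_trans ha hb
      obtain ⟨j, rfl⟩ : ∃ j, b = j + 1 := ⟨b - 1, by omega⟩
      calc u a ≤ u (j + 1) := ih
        _ ≤ P * u (j + 1) := Nat.le_mul_of_pos_left _ (by omega)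
        _ ≤ P * u (j + 1) + u j := Nat.le_add_right _ _
        _ = u (j + 2) := (hrec' j).symm
  have hu2 : u 2 = P := by rw [hrec' 0, hu0, hu1]; ring
  have hun3 : 3 ≤ u n := by
    have := hmono 2 n (by omega) hn
    omega
  have hphi_even : Even (u m) := by
    rw [← h]
    exact Nat.totient_even (by omega)
  have hm0 : 1 ≤ m := by
    rcases Nat.eq_zero_or_pos m with rfl | h1
    · rw [hu0] at h
      have := Nat.totient_pos.mpr (show 0 < u n by omega)
      omega
    · exact h1
  rcases Nat.even_or_odd P with hPe | hPo
  · -- P even : u k has the parity of k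
    have hpar : ∀ k, u k % 2 = k % 2 ∧ u (k + 1) % 2 = (k + 1) % 2 := by
      intro k
      induction k with
      | zero => simp [hu0, hu1]
      | succ k ih =>
        refine ⟨ih.2, ?_⟩
        rw [hrec' k]
        obtain ⟨c, hc⟩ := hPe
        have hP2 : P = 2 * c := by omega
        rw [hP2, show 2 * c * u (k + 1) + u k = 2 * (c * u (k + 1)) + u k by ring,
          Nat.mul_add_mod]
        have := ih.1
        omega
    have h1 := (hpar m).1
    obtain ⟨t, ht⟩ := hphi_even
    exact Nat.even_iff.mpr (by omega)
  · -- P odd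
    by_contra hmodd
    have hmod2 : m % 2 = 1 := Nat.odd_iff.mp (Nat.not_even_iff_odd.mp hmodd)
    have hPodd : P % 2 = 1 := Nat.odd_iff.mp hPo
    set x : ZMod 4 := (P : ZMod 4) with hxdef
    have hx : x ^ 2 = 1 := by
      have h14 : P % 4 = 1 ∨ P % 4 = 3 := by omega
      rw [hxdef, ← ZMod.natCast_mod]
      rcases h14 with hh | hh <;> rw [hh] <;> decide
    have hrecC : ∀ k, (u (k + 2) : ZMod 4) = x * u (k + 1) + u k := by
      intro k
      rw [hrec' k]
      push_cast
      ring
    have hc0 : (u 0 : ZMod 4) = 0 := by rw [hu0]; norm_num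
    have hc1 : (u 1 : ZMod 4) = 1 := by rw [hu1]; norm_num
    have hc2 : (u 2 : ZMod 4) = x := by rw [hrecC 0, hc1, hc0]; ring
    have hc3 : (u 3 : ZMod 4) = 2 := by
      rw [hrecC 1, hc2, hc1]
      linear_combination hx
    have hc4 : (u 4 : ZMod 4) = 3 * x := by
      rw [hrecC 2, hc3, hc2]; ring
    have h40 : (4 : ZMod 4) = 0 := by decide
    have hc5 : (u 5 : ZMod 4) = 1 := by
      rw [hrecC 3, hc4, hc3]
      linear_combination (3 : ZMod 4) * hx + h40
    have hc6 : (u 6 : ZMod 4) = 0 := by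
      rw [hrecC 4, hc5, hc4]
      linear_combination x * h40
    have hc7 : (u 7 : ZMod 4) = 1 := by
      rw [hrecC 5, hc6, hc5]; ring
    have hper : ∀ k, (u (k + 6) : ZMod 4) = u k ∧ (u (k + 7) : ZMod 4) = u (k + 1) := by
      intro k
      induction k with
      | zero => exact ⟨by rw [hc6, hc0], by rw [hc7, hc1]⟩
      | succ k ih =>
        refine ⟨ih.2, ?_⟩
        show (u (k + 6 + 2) : ZMod 4) = u (k + 2)
        rw [hrecC (k + 6), hrecC k, ih.1, show k + 6 + 1 = k + 7 from rfl, ih.2]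
    have hper6 : ∀ q r, (u (6 * q + r) : ZMod 4) = u r := by
      intro q
      induction q with
      | zero => intro r; norm_num
      | succ q ih =>
        intro r
        have he : 6 * (q + 1) + r = 6 * q + (r + 6) := by ring
        rw [he, ih (r + 6), show r + 6 = r + 6 from rfl]
        exact (hper r).1
    have hvm : (u m : ZMod 4) = u (m % 6) := by
      conv_lhs => rw [show m = 6 * (m / 6) + m % 6 by omega]
      exact hper6 (m / 6) (m % 6)
    obtain ⟨t, ht⟩ := hphi_even
    have hum2 : u m % 2 = 0 := by omega
    have hval : u m % 4 = (u m : ZMod 4).val := (ZMod.val_natCast 4 (u m)).symm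
    have hm6 : m % 6 = 1 ∨ m % 6 = 3 ∨ m % 6 = 5 := by omega
    have hm63 : m % 6 = 3 := by
      rcases hm6 with hh | hh | hh
      · rw [hh, hc1] at hvm
        rw [hvm] at hval
        simp [ZMod.val] at hval
        omega
      · exact hh
      · rw [hh, hc5] at hvm
        rw [hvm] at hval
        simp [ZMod.val] at hval
        omega
    rw [hm63, hc3] at hvm
    rw [hvm] at hval
    have hval2 : u m % 4 = 2 := by rw [hval]; rfl
    have hnd4 : ¬ (4 ∣ u m) := by omega
    have hkey : u n ≤ 3 * u m := by
      have := tot_lemma_aux (u n) hun3 (by rw [h]; exact hnd4)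
      omega
    have hm3 : 3 ≤ m := by omega
    have hn4 : 4 ≤ n := by omega
    have hub : u m ≤ u (n - 1) := hmono m (n - 1) hm0 (by omega)
    have hlow : u n = P * u (n - 1) + u (n - 2) := hrec n (by omega)
    have hposn2 : 1 ≤ u (n - 2) := hpos (n - 2) (by omega)
    have hmul : 3 * u (n - 1) ≤ P * u (n - 1) := Nat.mul_le_mul_right _ hP
    omega
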